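/- Let H be a real Hilbert space and let C ⊆ H be nonempty, closed and convex. If T : C → C is a nonexpansive and asymptotically regular operator with Fix(T) ≠ ∅, then for every x₀ ∈ C, the sequence (x_n) generated by x_n = T(x_{n−1}) converges weakly to a point x_* ∈ Fix(T). -/

import Mathlib

open Filter Topology RealInnerProductSpace

variable {H : Type*} [NormedAddCommGroup H] [InnerProductSpace ℝ H] [CompleteSpace H]

/-- Weak convergence in a Hilbert space: `x n ⇀ p`. -/
def WeakConvergesTo (x : ℕ → H) (p : H) : Prop :=
  ∀ y : H, Tendsto (fun n => ⟪x n, y⟫) atTop (𝓝 ⟪p, y⟫)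

/-- `compSeq n g = g (n-1) ∘ ⋯ ∘ g 0` (the identity when `n = 0`). -/
def compSeq {α : Type*} : ℕ → (ℕ → α → α) → (α → α)
  | 0, _ => id
  | n + 1, g => g n ∘ compSeq n g

/-- `P` is the metric projection onto `C`. -/
def IsProjOn (C : Set H) (P : H → H) : Prop :=
  ∀ x, P x ∈ C ∧ ∀ y ∈ C, ‖x - P x‖ ≤ ‖x - y‖

/-- Nonexpansive operator. -/
def Nonexpansive (T : H → H) : Prop := ∀ x y, ‖T x - T y‖ ≤ ‖x - y‖

/-- Condition (S). -/
def CondS (T : H → H) : Prop :=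
  ∀ x y : ℕ → H, (∃ c, ∀ n, ‖x n - y n‖ ≤ c) →
    Tendsto (fun n => ‖x n - y n‖ - ‖T (x n) - T (y n)‖) atTop (𝓝 0) →
    Tendsto (fun n => x n - y n - (T (x n) - T (y n))) atTop (𝓝 (0 : H))

/-- Strongly nonexpansive operator. -/
def StronglyNonexpansive (T : H → H) : Prop := Nonexpansive T ∧ CondS T

/-- Firmly nonexpansive operator. -/
def FirmlyNonexpansive (T : H → H) : Prop :=
  ∀ x y, ‖T x - T y‖ ^ 2 ≤ ⟪T x - T y, x - y⟫

/-- Averaged operator. -/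
def Averaged (T : H → H) : Prop :=
  ∃ lam ∈ Set.Ioo (0 : ℝ) 1, ∃ U : H → H, Nonexpansive U ∧
    T = fun x => (1 - lam) • x + lam • U x

/-- The unrestricted `r`-set Douglas–Rachford operators `S n` associated with projections
`proj i` onto the sets `C i`, indices chosen by `f`: `S n = 2⁻¹ (Id + R_{C_{f((r-1)n+r-1)}} ∘ ⋯ ∘ R_{C_{f((r-1)n)}})`. -/
noncomputable def drS (proj : ℕ → H → H) (r : ℕ) (f : ℕ → ℕ) (n : ℕ) : H → H :=
  fun x => (2⁻¹ : ℝ) • (x + compSeq r (fun j y => (2 : ℝ) • proj (f ((r - 1) * n + j)) y - y) x)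


/-- Bounded sequences in a Hilbert space have weakly convergent subsequences. -/
lemma exists_weak_subseq (x : ℕ → H) (B : ℝ) (hB : ∀ n, ‖x n‖ ≤ B) :
    ∃ (p : H) (φ : ℕ → ℕ), StrictMono φ ∧
      ∀ y : H, Tendsto (fun n => ⟪x (φ n), y⟫) atTop (𝓝 ⟪p, y⟫) := by
  have hB0 : 0 ≤ B := le_trans (norm_nonneg _) (hB 0)
  -- the separable closed subspace containing the sequence
  set M : Submodule ℝ H := (Submodule.span ℝ (Set.range x)).topologicalClosure with hM
  haveI : CompleteSpace M :=
    (Submodule.span ℝ (Set.range x)).isClosed_topologicalClosure.completeSpace_coe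
  have hxM : ∀ n, x n ∈ M :=
    fun n => Submodule.le_topologicalClosure _ (Submodule.subset_span ⟨n, rfl⟩)
  -- a countable dense subset
  have hsep : TopologicalSpace.IsSeparable (M : Set H) :=
    ((Set.countable_range x).isSeparable.span).closure
  obtain ⟨c, hc_count, hc_dense⟩ := hsep
  obtain ⟨e, he⟩ : ∃ e : ℕ → H, insert (0 : H) c = Set.range e :=
    (hc_count.insert 0).exists_eq_range (Set.insert_nonempty _ _)
  have hMe : (M : Set H) ⊆ closure (Set.range e) := by
    rw [← he]
    exact hc_dense.trans (closure_mono (Set.subset_insert _ _))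
  -- diagonal extraction via compactness of a countable product of intervals
  set g : ℕ → ∀ _ : ℕ, ℝ := fun n k => ⟪x n, e k⟫ with hg
  have hcomp : IsCompact (Set.pi Set.univ fun k : ℕ => Set.Icc (-(B * ‖e k‖)) (B * ‖e k‖)) :=
    isCompact_univ_pi fun k => isCompact_Icc
  have hmem : ∀ n, g n ∈ Set.pi Set.univ fun k : ℕ => Set.Icc (-(B * ‖e k‖)) (B * ‖e k‖) := by
    intro n k _
    have := abs_real_inner_le_norm (x n) (e k)
    have h2 : |⟪x n, e k⟫| ≤ B * ‖e k‖ :=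
      this.trans (mul_le_mul_of_nonneg_right (hB n) (norm_nonneg _))
    exact abs_le.1 h2
  obtain ⟨a, -, φ, hφ, hconv⟩ := hcomp.tendsto_subseq hmem
  have hconv' : ∀ k, Tendsto (fun n => ⟪x (φ n), e k⟫) atTop (𝓝 (a k)) := by
    intro k
    exact (tendsto_pi_nhds.1 hconv) k
  -- convergence of ⟪x (φ n), y⟫ for every y
  have conv : ∀ y : H, ∃ l, Tendsto (fun n => ⟪x (φ n), y⟫) atTop (𝓝 l) := by
    -- first, for y in the closure of range e
    have conv1 : ∀ y ∈ closure (Set.range e), CauchySeq fun n => ⟪x (φ n), y⟫ := by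
      intro y hy
      rw [Metric.cauchySeq_iff]
      intro ε hε
      obtain ⟨z, ⟨k, rfl⟩, hz⟩ := Metric.mem_closure_iff.1 hy (ε / (4 * (B + 1))) (by positivity)
      have hcauchy := (hconv' k).cauchySeq
      rw [Metric.cauchySeq_iff] at hcauchy
      obtain ⟨N, hN⟩ := hcauchy (ε / 2) (by positivity)
      refine ⟨N, fun m hm n hn => ?_⟩
      have key : ∀ i j, N ≤ i → N ≤ j →
          dist (⟪x (φ i), y⟫) (⟪x (φ j), y⟫) < ε := by
        intro i j hi hj
        have h1 : dist (⟪x (φ i), y⟫) (⟪x (φ j), y⟫)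
            ≤ |⟪x (φ i) - x (φ j), y - e k⟫| + dist (⟪x (φ i), e k⟫) (⟪x (φ j), e k⟫) := by
          rw [Real.dist_eq, Real.dist_eq]
          have : ⟪x (φ i), y⟫ - ⟪x (φ j), y⟫ =
              ⟪x (φ i) - x (φ j), y - e k⟫ + (⟪x (φ i), e k⟫ - ⟪x (φ j), e k⟫) := by
            simp [inner_sub_left, inner_sub_right]
          rw [this]
          exact abs_add_le _ _
        have h2 : |⟪x (φ i) - x (φ j), y - e k⟫| ≤ (2 * B) * (ε / (4 * (B + 1))) := by
          refine (abs_real_inner_le_norm _ _).trans ?_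
          have hn1 : ‖x (φ i) - x (φ j)‖ ≤ 2 * B := by
            calc ‖x (φ i) - x (φ j)‖ ≤ ‖x (φ i)‖ + ‖x (φ j)‖ := norm_sub_le _ _
            _ ≤ B + B := add_le_add (hB _) (hB _)
            _ = 2 * B := by ring
          have hn2 : ‖y - e k‖ ≤ ε / (4 * (B + 1)) := by
            rw [← dist_eq_norm]; exact le_of_lt hz
          exact mul_le_mul hn1 hn2 (norm_nonneg _) (by positivity)
        have h3 : (2 * B) * (ε / (4 * (B + 1))) ≤ ε / 2 := by
          have heq : (2 * B) * (ε / (4 * (B + 1))) = (2 * B * ε) / (4 * (B + 1)) := by ring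
          rw [heq, div_le_div_iff₀ (by positivity) (by norm_num)]
          nlinarith
        calc dist (⟪x (φ i), y⟫) (⟪x (φ j), y⟫)
            ≤ (2 * B) * (ε / (4 * (B + 1))) + dist (⟪x (φ i), e k⟫) (⟪x (φ j), e k⟫) :=
              h1.trans (add_le_add_left h2 _)
          _ < ε / 2 + ε / 2 := by
              have := hN i hi j hj
              linarith
          _ = ε := by ring
      exact key m n hm hn
    intro y
    set Py : H := (M.orthogonalProjectionOnto y : H) with hPy
    have hyP : ∀ n, ⟪x (φ n), y⟫ = ⟪x (φ n), Py⟫ := by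
      intro n
      have horth : y - Py ∈ Mᗮ := Submodule.sub_starProjection_mem_orthogonal (K := M) y
      have h0 : ⟪x (φ n), y - Py⟫ = 0 :=
        (Submodule.mem_orthogonal M (y - Py)).1 horth _ (hxM _)
      have := inner_sub_right (𝕜 := ℝ) (x (φ n)) y Py
      rw [h0] at this
      linarith
    have hPyM : Py ∈ closure (Set.range e) := hMe (M.orthogonalProjectionOnto y).2
    obtain ⟨l, hl⟩ := cauchySeq_tendsto_of_complete (conv1 Py hPyM)
    exact ⟨l, by simp only [hyP]; exact hl⟩
  -- build the weak limit via the Riesz representation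
  choose L hL using conv
  have hadd : ∀ y z, L (y + z) = L y + L z := by
    intro y z
    refine tendsto_nhds_unique ?_ ((hL y).add (hL z))
    have : (fun n => ⟪x (φ n), y + z⟫) = fun n => ⟪x (φ n), y⟫ + ⟪x (φ n), z⟫ := by
      funext n; exact inner_add_right _ _ _
    rw [← this]; exact hL (y + z)
  have hsmul : ∀ (c : ℝ) y, L (c • y) = c * L y := by
    intro c y
    refine tendsto_nhds_unique ?_ ((hL y).const_mul c)
    have : (fun n => ⟪x (φ n), c • y⟫) = fun n => c * ⟪x (φ n), y⟫ := by
      funext n; exact real_inner_smul_right _ _ _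
    rw [← this]; exact hL (c • y)
  have hbound : ∀ y, ‖L y‖ ≤ B * ‖y‖ := by
    intro y
    have : ∀ n, |⟪x (φ n), y⟫| ≤ B * ‖y‖ := fun n =>
      (abs_real_inner_le_norm _ _).trans (mul_le_mul_of_nonneg_right (hB _) (norm_nonneg _))
    have h1 : Tendsto (fun n => |⟪x (φ n), y⟫|) atTop (𝓝 |L y|) := (hL y).abs
    exact le_of_tendsto h1 (Eventually.of_forall this)
  set f : H →L[ℝ] ℝ :=
    LinearMap.mkContinuous
      { toFun := L, map_add' := hadd, map_smul' := hsmul } B hbound with hf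
  refine ⟨(InnerProductSpace.toDual ℝ H).symm f, φ, hφ, fun y => ?_⟩
  rw [InnerProductSpace.toDual_symm_apply]
  exact hL y


/-- Demiclosedness of `I - T` for a nonexpansive `T` on a closed convex set. -/
lemma demiclosed_aux (C : Set H) (hcl : IsClosed C) (hconv : Convex ℝ C) (hne : C.Nonempty)
    (T : H → H) (hT : ∀ x ∈ C, ∀ y ∈ C, ‖T x - T y‖ ≤ ‖x - y‖)
    (z : ℕ → H) (hzC : ∀ n, z n ∈ C) (B : ℝ) (hB : ∀ n, ‖z n‖ ≤ B)
    (hreg : Tendsto (fun n => ‖T (z n) - z n‖) atTop (𝓝 0))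
    (q : H) (hw : ∀ y : H, Tendsto (fun n => ⟪z n, y⟫) atTop (𝓝 ⟪q, y⟫)) :
    q ∈ C ∧ T q = q := by
  -- Step 1: q ∈ C (closed convex sets are weakly closed)
  have hqC : q ∈ C := by
    obtain ⟨v, hvC, hv⟩ := exists_norm_eq_iInf_of_complete_convex hne (hcl.isComplete) hconv q
    have hchar := (norm_eq_iInf_iff_real_inner_le_zero hconv hvC).1 hv
    have hineq : ∀ n, ⟪q - v, z n - v⟫ ≤ 0 := fun n => hchar _ (hzC n)
    have htend : Tendsto (fun n => ⟪q - v, z n - v⟫) atTop (𝓝 (‖q - v‖ ^ 2)) := by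
      have h1 : ∀ n, ⟪q - v, z n - v⟫ = ⟪z n, q - v⟫ - ⟪v, q - v⟫ := by
        intro n
        rw [real_inner_comm, inner_sub_left]
      simp only [h1]
      have h2 : ‖q - v‖ ^ 2 = ⟪q, q - v⟫ - ⟪v, q - v⟫ := by
        rw [← inner_sub_left, real_inner_self_eq_norm_sq]
      rw [h2]
      exact (hw (q - v)).sub tendsto_const_nhds
    have hle : ‖q - v‖ ^ 2 ≤ 0 := le_of_tendsto htend (Eventually.of_forall hineq)
    have : q - v = 0 := by
      have := sq_nonneg ‖q - v‖
      have h0 : ‖q - v‖ ^ 2 = 0 := le_antisymm hle this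
      simpa [pow_eq_zero_iff] using h0
    rwa [sub_eq_zero.1 this]
  -- Step 2: T q = q
  refine ⟨hqC, ?_⟩
  set d : ℝ := ‖q - T q‖ ^ 2 with hd
  have hkey : ∀ n, d ≤ ‖T (z n) - z n‖ ^ 2 + 2 * ‖T (z n) - z n‖ * ‖z n - q‖
      - 2 * ⟪z n - q, q - T q⟫ := by
    intro n
    have h1 : ‖z n - T q‖ ≤ ‖T (z n) - z n‖ + ‖z n - q‖ := by
      calc ‖z n - T q‖ ≤ ‖z n - T (z n)‖ + ‖T (z n) - T q‖ := norm_sub_le_norm_sub_add_norm_sub _ _ _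
        _ ≤ ‖T (z n) - z n‖ + ‖z n - q‖ := by
            rw [norm_sub_rev (z n)]
            exact add_le_add_right (hT _ (hzC n) _ hqC) _
    have h2 : ‖z n - T q‖ ^ 2 ≤ (‖T (z n) - z n‖ + ‖z n - q‖) ^ 2 :=
      pow_le_pow_left₀ (norm_nonneg _) h1 2
    have h3 : ‖z n - T q‖ ^ 2 = ‖z n - q‖ ^ 2 + 2 * ⟪z n - q, q - T q⟫ + d := by
      have : z n - T q = (z n - q) + (q - T q) := by abel
      rw [this, norm_add_sq_real]
    nlinarith [h2, h3]
  have htend0 : Tendsto (fun n => ‖T (z n) - z n‖ ^ 2 + 2 * ‖T (z n) - z n‖ * ‖z n - q‖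
      - 2 * ⟪z n - q, q - T q⟫) atTop (𝓝 0) := by
    have t1 : Tendsto (fun n => ‖T (z n) - z n‖ ^ 2) atTop (𝓝 0) := by
      have := hreg.mul hreg
      simpa [sq] using this
    have t2 : Tendsto (fun n => 2 * ‖T (z n) - z n‖ * ‖z n - q‖) atTop (𝓝 0) := by
      have hbd : ∀ n, ‖2 * ‖T (z n) - z n‖ * ‖z n - q‖‖ ≤ 2 * (B + ‖q‖) * ‖T (z n) - z n‖ := by
        intro n
        have hq : ‖z n - q‖ ≤ B + ‖q‖ :=
          (norm_sub_le _ _).trans (add_le_add_left (hB n) _)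
        rw [Real.norm_eq_abs, abs_of_nonneg (by positivity)]
        calc 2 * ‖T (z n) - z n‖ * ‖z n - q‖ ≤ 2 * ‖T (z n) - z n‖ * (B + ‖q‖) := by
              apply mul_le_mul_of_nonneg_left hq (by positivity)
          _ = 2 * (B + ‖q‖) * ‖T (z n) - z n‖ := by ring
      have h2 : Tendsto (fun n => 2 * (B + ‖q‖) * ‖T (z n) - z n‖) atTop (𝓝 0) := by
        have := hreg.const_mul (2 * (B + ‖q‖))
        simpa using this
      exact squeeze_zero_norm hbd h2
    have t3 : Tendsto (fun n => 2 * ⟪z n - q, q - T q⟫) atTop (𝓝 0) := by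
      have h1 : ∀ n, ⟪z n - q, q - T q⟫ = ⟪z n, q - T q⟫ - ⟪q, q - T q⟫ := by
        intro n; rw [inner_sub_left]
      have h2 : Tendsto (fun n => ⟪z n, q - T q⟫ - ⟪q, q - T q⟫) atTop (𝓝 0) := by
        have := (hw (q - T q)).sub (tendsto_const_nhds (x := ⟪q, q - T q⟫))
        simpa using this
      simp only [h1]
      have := h2.const_mul 2
      simpa using this
    have := (t1.add t2).sub t3
    simpa using this
  have hd0 : d ≤ 0 := ge_of_tendsto htend0 (Eventually.of_forall hkey)
  have : q - T q = 0 := by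
    have h0 : ‖q - T q‖ ^ 2 = 0 := le_antisymm hd0 (sq_nonneg _)
    simpa [pow_eq_zero_iff] using h0
  exact (sub_eq_zero.1 this).symm

/-- Opial's theorem: a nonexpansive asymptotically regular self-mapping of a
nonempty closed convex set with a fixed point generates weakly convergent Picard iterates. -/
theorem stmt19
    (C : Set H) (hne : C.Nonempty) (hcl : IsClosed C) (hconv : Convex ℝ C)
    (T : H → H) (hmaps : Set.MapsTo T C C)
    (hT : ∀ x ∈ C, ∀ y ∈ C, ‖T x - T y‖ ≤ ‖x - y‖)
    (har : ∀ x ∈ C, Tendsto (fun n => ‖T^[n + 1] x - T^[n] x‖) atTop (𝓝 0))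
    (hfix : ∃ z ∈ C, T z = z)
    (x : ℕ → H) (hx0 : x 0 ∈ C) (hx : ∀ n, x (n + 1) = T (x n)) :
    ∃ p, (p ∈ C ∧ T p = p) ∧ WeakConvergesTo x p := by
  obtain ⟨z, hzC, hz⟩ := hfix
  have hxC : ∀ n, x n ∈ C := by
    intro n
    induction n with
    | zero => exact hx0
    | succ n ih => rw [hx]; exact hmaps ih
  have hxit : ∀ n, x n = T^[n] (x 0) := by
    intro n
    induction n with
    | zero => simp
    | succ n ih => rw [hx, ih, Function.iterate_succ_apply']
  have hreg : Tendsto (fun n => ‖T (x n) - x n‖) atTop (𝓝 0) := by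
    have h := har (x 0) hx0
    have heq : (fun n => ‖T (x n) - x n‖) = fun n => ‖T^[n + 1] (x 0) - T^[n] (x 0)‖ := by
      funext n
      rw [← hxit n, ← hx n, hxit (n + 1), hxit n]
    rw [heq]; exact h
  -- Fejér monotonicity
  have hfej : ∀ q, q ∈ C → T q = q → Antitone fun n => ‖x n - q‖ := by
    intro q hqC hq
    apply antitone_nat_of_succ_le
    intro n
    rw [hx n]
    calc ‖T (x n) - q‖ = ‖T (x n) - T q‖ := by rw [hq]
      _ ≤ ‖x n - q‖ := hT _ (hxC n) _ hqC
  have hlim : ∀ q, q ∈ C → T q = q →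
      Tendsto (fun n => ‖x n - q‖) atTop (𝓝 (⨅ n, ‖x n - q‖)) := by
    intro q hqC hq
    exact tendsto_atTop_ciInf (hfej q hqC hq) ⟨0, fun _ ⟨n, hn⟩ => hn ▸ norm_nonneg _⟩
  -- bound
  set B : ℝ := ‖x 0 - z‖ + ‖z‖ with hBdef
  have hB : ∀ n, ‖x n‖ ≤ B := by
    intro n
    calc ‖x n‖ = ‖x n - z + z‖ := by rw [sub_add_cancel]
      _ ≤ ‖x n - z‖ + ‖z‖ := norm_add_le _ _
      _ ≤ ‖x 0 - z‖ + ‖z‖ := add_le_add_left (hfej z hzC hz (Nat.zero_le n)) _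
  -- subsequential weak limits are fixed points
  have hmain : ∀ σ : ℕ → ℕ, StrictMono σ → ∃ (q : H) (ms : ℕ → ℕ), StrictMono ms ∧
      (q ∈ C ∧ T q = q) ∧
      ∀ y : H, Tendsto (fun n => ⟪x (σ (ms n)), y⟫) atTop (𝓝 ⟪q, y⟫) := by
    intro σ hσ
    obtain ⟨q, ms, hms, hw⟩ := exists_weak_subseq (x ∘ σ) B fun n => hB _
    have hw' : ∀ y : H, Tendsto (fun n => ⟪x (σ (ms n)), y⟫) atTop (𝓝 ⟪q, y⟫) := hw
    have regsub : Tendsto (fun n => ‖T (x (σ (ms n))) - x (σ (ms n))‖) atTop (𝓝 0) :=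
      hreg.comp ((hσ.comp hms).tendsto_atTop)
    have hfixq := demiclosed_aux C hcl hconv hne T hT (fun n => x (σ (ms n)))
      (fun n => hxC _) B (fun n => hB _) regsub q hw'
    exact ⟨q, ms, hms, hfixq, hw'⟩
  obtain ⟨p, ms0, hms0, hpfix, hpw⟩ := hmain id strictMono_id
  -- uniqueness of subsequential weak limits among fixed points
  have huniq : ∀ (q : H), q ∈ C → T q = q →
      ∀ σ : ℕ → ℕ, StrictMono σ →
      (∀ y : H, Tendsto (fun n => ⟪x (σ n), y⟫) atTop (𝓝 ⟪q, y⟫)) → q = p := by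
    intro q hqC hq σ hσ hw
    set Ap : ℝ := ⨅ n, ‖x n - p‖
    set Aq : ℝ := ⨅ n, ‖x n - q‖
    have hAp := hlim p hpfix.1 hpfix.2
    have hAq := hlim q hqC hq
    have hident : ∀ n, ‖x n - q‖ ^ 2 - ‖x n - p‖ ^ 2 - ‖p - q‖ ^ 2
        = 2 * ⟪x n - p, p - q⟫ := by
      intro n
      have : x n - q = (x n - p) + (p - q) := by abel
      rw [this, norm_add_sq_real]
      ring
    -- along σ (weakly → q)
    have e1 : Aq ^ 2 - Ap ^ 2 - ‖p - q‖ ^ 2 = -2 * ‖p - q‖ ^ 2 := by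
      have lhs : Tendsto (fun n => ‖x (σ n) - q‖ ^ 2 - ‖x (σ n) - p‖ ^ 2 - ‖p - q‖ ^ 2)
          atTop (𝓝 (Aq ^ 2 - Ap ^ 2 - ‖p - q‖ ^ 2)) := by
        have h1 : Tendsto (fun n => ‖x (σ n) - q‖) atTop (𝓝 Aq) := hAq.comp hσ.tendsto_atTop
        have h2 : Tendsto (fun n => ‖x (σ n) - p‖) atTop (𝓝 Ap) := hAp.comp hσ.tendsto_atTop
        exact ((h1.pow 2).sub (h2.pow 2)).sub tendsto_const_nhds
      have rhs : Tendsto (fun n => ‖x (σ n) - q‖ ^ 2 - ‖x (σ n) - p‖ ^ 2 - ‖p - q‖ ^ 2)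
          atTop (𝓝 (-2 * ‖p - q‖ ^ 2)) := by
        simp only [hident]
        have h3 : Tendsto (fun n => ⟪x (σ n) - p, p - q⟫) atTop (𝓝 ⟪q - p, p - q⟫) := by
          have h4 : ∀ n, ⟪x (σ n) - p, p - q⟫ = ⟪x (σ n), p - q⟫ - ⟪p, p - q⟫ := fun n =>
            inner_sub_left _ _ _
          simp only [h4]
          have h5 : (⟪q - p, p - q⟫ : ℝ) = ⟪q, p - q⟫ - ⟪p, p - q⟫ := inner_sub_left _ _ _
          rw [h5]
          exact (hw (p - q)).sub tendsto_const_nhds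
        have h6 : (⟪q - p, p - q⟫ : ℝ) = -(‖p - q‖ ^ 2) := by
          rw [show q - p = -(p - q) by abel, inner_neg_left, real_inner_self_eq_norm_sq]
        have := h3.const_mul 2
        rw [h6] at this
        convert this using 2
        ring
      exact tendsto_nhds_unique lhs rhs
    -- along ms0 (weakly → p)
    have e2 : Aq ^ 2 - Ap ^ 2 - ‖p - q‖ ^ 2 = 0 := by
      have lhs : Tendsto (fun n => ‖x (ms0 n) - q‖ ^ 2 - ‖x (ms0 n) - p‖ ^ 2 - ‖p - q‖ ^ 2)
          atTop (𝓝 (Aq ^ 2 - Ap ^ 2 - ‖p - q‖ ^ 2)) := by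
        have h1 : Tendsto (fun n => ‖x (ms0 n) - q‖) atTop (𝓝 Aq) := hAq.comp hms0.tendsto_atTop
        have h2 : Tendsto (fun n => ‖x (ms0 n) - p‖) atTop (𝓝 Ap) := hAp.comp hms0.tendsto_atTop
        exact ((h1.pow 2).sub (h2.pow 2)).sub tendsto_const_nhds
      have rhs : Tendsto (fun n => ‖x (ms0 n) - q‖ ^ 2 - ‖x (ms0 n) - p‖ ^ 2 - ‖p - q‖ ^ 2)
          atTop (𝓝 0) := by
        simp only [hident]
        have h3 : Tendsto (fun n => ⟪x (ms0 n) - p, p - q⟫) atTop (𝓝 0) := by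
          have h4 : ∀ n, ⟪x (ms0 n) - p, p - q⟫ = ⟪x (ms0 n), p - q⟫ - ⟪p, p - q⟫ := fun n =>
            inner_sub_left _ _ _
          simp only [h4]
          have := (hpw (p - q)).sub (tendsto_const_nhds (x := (⟪p, p - q⟫ : ℝ)))
          simpa using this
        have := h3.const_mul 2
        simpa using this
      exact tendsto_nhds_unique lhs rhs
    have : ‖p - q‖ ^ 2 = 0 := by
      rw [e2] at e1
      nlinarith [sq_nonneg ‖p - q‖]
    have hpq : p - q = 0 := by
      simpa [pow_eq_zero_iff] using this
    rw [← sub_eq_zero]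
    rw [show q - p = -(p - q) by abel, hpq, neg_zero]
  refine ⟨p, hpfix, ?_⟩
  intro y
  apply tendsto_of_subseq_tendsto
  intro ns hns
  obtain ⟨ψ, hψ, hψns⟩ : ∃ ψ : ℕ → ℕ, StrictMono ψ ∧ StrictMono (ns ∘ ψ) :=
    strictMono_subseq_of_tendsto_atTop hns
  obtain ⟨q, ms, hms, hqfix, hqw⟩ := hmain (ns ∘ ψ) hψns
  have hqp : q = p :=
    huniq q hqfix.1 hqfix.2 ((ns ∘ ψ) ∘ ms) (hψns.comp hms) hqw
  refine ⟨ψ ∘ ms, ?_⟩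
  have := hqw y
  rw [hqp] at this
  exact this
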